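/- Let H₀ ≠ 0 and a(t) = e^{H₀ t}. The vector field X₇ = −(1/H₀) ∂_t + r ∂_r Lie-derives each of the four coframe one-forms h¹ = dt, h² = a(t) dr, h³ = a(t) r dθ, h⁴ = a(t) r sinθ dφ to zero: for each a ∈ {1,2,3,4} and each coordinate index μ, X₇^ν ∂_ν h^a_μ + h^a_ν ∂_μ X₇^ν = 0 at every point of U = {(t,r,θ,φ) : r > 0, 0 < θ < π}; moreover the Lie derivative of the k = 0 spin-connection one-forms ω_{23} = −dθ, ω_{24} = −sinθ dφ, ω_{34} = −cosθ dφ (all other ω_{ab} = 0) along X₇ also vanishes: X₇^ν ∂_ν ω_{abμ} + ω_{abν} ∂_μ X₇^ν = 0 on U. Hence X₇ is an affine frame symmetry of the k = 0 Teleparallel Robertson–Walker geometry with a(t) = e^{H₀ t}. -/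

import Mathlib

/-!
STATEMENT 17: Let H₀ ≠ 0 and a(t) = e^{H₀ t}. The vector field
X₇ = −(1/H₀) ∂_t + r ∂_r Lie-derives each of the coframe one-forms
h¹ = dt, h² = a dr, h³ = a r dθ, h⁴ = a r sinθ dφ to zero:
X₇^ν ∂_ν h^a_μ + h^a_ν ∂_μ X₇^ν = 0 on U = {(t,r,θ,φ) : r > 0, 0 < θ < π};
moreover the Lie derivative of the k = 0 spin-connection one-forms
ω_{23} = −dθ, ω_{24} = −sinθ dφ, ω_{34} = −cosθ dφ (all other ω_{ab} = 0,
ω antisymmetric) along X₇ also vanishes. Hence X₇ is an affine frame symmetry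
of the k = 0 TRW geometry with a(t) = e^{H₀ t}.
Coordinates: x : Fin 4 → ℝ with t = x 0, r = x 1, θ = x 2, φ = x 3;
frame indices 1..4 are Fin 4 indices 0..3.
-/

open Real

noncomputable section

/-- Partial derivative in the μ-th coordinate direction. -/
def pd (μ : Fin 4) (f : (Fin 4 → ℝ) → ℝ) (x : Fin 4 → ℝ) : ℝ :=
  fderiv ℝ f x (Pi.single μ 1)

/-- The vector field X₇ = −(1/H₀) ∂_t + r ∂_r. -/
def X7 (H₀ : ℝ) (x : Fin 4 → ℝ) : Fin 4 → ℝ :=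
  ![-(1 / H₀), x 1, 0, 0]

/-- The coframe one-forms h¹ = dt, h² = a(t) dr, h³ = a(t) r dθ,
h⁴ = a(t) r sinθ dφ with a(t) = e^{H₀ t}: `coframe H₀ x a μ` is h^a_μ(x). -/
def coframe (H₀ : ℝ) (x : Fin 4 → ℝ) : Matrix (Fin 4) (Fin 4) ℝ :=
  Matrix.diagonal
    ![1, Real.exp (H₀ * x 0), Real.exp (H₀ * x 0) * x 1,
      Real.exp (H₀ * x 0) * x 1 * Real.sin (x 2)]

/-- The k = 0 spin-connection one-forms: ω_{23} = −dθ, ω_{24} = −sinθ dφ,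
ω_{34} = −cosθ dφ, antisymmetric in (a,b), all others zero:
`conn x a b μ` is ω_{abμ}(x). -/
def conn (x : Fin 4 → ℝ) (a b μ : Fin 4) : ℝ :=
  if a = 1 ∧ b = 2 ∧ μ = 2 then -1
  else if a = 2 ∧ b = 1 ∧ μ = 2 then 1
  else if a = 1 ∧ b = 3 ∧ μ = 3 then -Real.sin (x 2)
  else if a = 3 ∧ b = 1 ∧ μ = 3 then Real.sin (x 2)
  else if a = 2 ∧ b = 3 ∧ μ = 3 then -Real.cos (x 2)
  else if a = 3 ∧ b = 2 ∧ μ = 3 then Real.cos (x 2)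
  else 0


section Helpers

/-- The coordinate projection as a continuous linear map. -/
def prj (i : Fin 4) : (Fin 4 → ℝ) →L[ℝ] ℝ := ContinuousLinearMap.proj i

@[simp] lemma prj_apply (i : Fin 4) (v : Fin 4 → ℝ) : prj i v = v i := rfl

lemma hasFDerivAt_proj (i : Fin 4) (x : Fin 4 → ℝ) :
    HasFDerivAt (fun y : Fin 4 → ℝ => y i) (prj i) x :=
  (prj i).hasFDerivAt

lemma pd_const (c : ℝ) (μ : Fin 4) (x : Fin 4 → ℝ) : pd μ (fun _ => c) x = 0 := by
  simp [pd]

lemma pd_proj (i μ : Fin 4) (x : Fin 4 → ℝ) :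
    pd μ (fun y => y i) x = if μ = i then 1 else 0 := by
  rw [pd, (hasFDerivAt_proj i x).fderiv]
  simp [Pi.single_apply, eq_comm]

lemma hasDerivAt_expH (H₀ s : ℝ) :
    HasDerivAt (fun u : ℝ => Real.exp (H₀ * u)) (H₀ * Real.exp (H₀ * s)) s := by
  simpa [mul_comm] using ((hasDerivAt_id s).const_mul H₀).exp

lemma hasFDerivAt_exp0 (H₀ : ℝ) (x : Fin 4 → ℝ) :
    HasFDerivAt (fun y : Fin 4 → ℝ => Real.exp (H₀ * y 0))
      ((H₀ * Real.exp (H₀ * x 0)) • prj 0) x :=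
  by have := (hasDerivAt_expH H₀ (x 0)).comp_hasFDerivAt x (hasFDerivAt_proj 0 x); exact this

lemma pd_exp (H₀ : ℝ) (μ : Fin 4) (x : Fin 4 → ℝ) :
    pd μ (fun y => Real.exp (H₀ * y 0)) x
      = if μ = 0 then H₀ * Real.exp (H₀ * x 0) else 0 := by
  rw [pd, (hasFDerivAt_exp0 H₀ x).fderiv]
  simp [Pi.single_apply, eq_comm]

lemma hasFDerivAt_expr (H₀ : ℝ) (x : Fin 4 → ℝ) :
    HasFDerivAt (fun y : Fin 4 → ℝ => Real.exp (H₀ * y 0) * y 1)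
      (Real.exp (H₀ * x 0) • prj 1
        + x 1 • ((H₀ * Real.exp (H₀ * x 0)) • prj 0)) x :=
  (hasFDerivAt_exp0 H₀ x).mul (hasFDerivAt_proj 1 x)

lemma pd_expr (H₀ : ℝ) (μ : Fin 4) (x : Fin 4 → ℝ) :
    pd μ (fun y => Real.exp (H₀ * y 0) * y 1) x
      = if μ = 0 then H₀ * Real.exp (H₀ * x 0) * x 1
        else if μ = 1 then Real.exp (H₀ * x 0) else 0 := by
  rw [pd, (hasFDerivAt_expr H₀ x).fderiv]
  fin_cases μ <;>
    simp [Pi.single_apply] <;> ring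

lemma hasDerivAt_sin' (s : ℝ) : HasDerivAt Real.sin (Real.cos s) s := Real.hasDerivAt_sin s

lemma hasFDerivAt_sin2 (x : Fin 4 → ℝ) :
    HasFDerivAt (fun y : Fin 4 → ℝ => Real.sin (y 2))
      (Real.cos (x 2) • prj 2) x :=
  by have := (Real.hasDerivAt_sin (x 2)).comp_hasFDerivAt x (hasFDerivAt_proj 2 x); exact this

lemma pd_sin (μ : Fin 4) (x : Fin 4 → ℝ) :
    pd μ (fun y => Real.sin (y 2)) x = if μ = 2 then Real.cos (x 2) else 0 := by
  rw [pd, (hasFDerivAt_sin2 x).fderiv]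
  fin_cases μ <;> simp [Pi.single_apply]

lemma pd_neg_sin (μ : Fin 4) (x : Fin 4 → ℝ) :
    pd μ (fun y => -Real.sin (y 2)) x = if μ = 2 then -Real.cos (x 2) else 0 := by
  rw [pd, (show HasFDerivAt (fun y : Fin 4 → ℝ => -Real.sin (y 2)) _ x from (hasFDerivAt_sin2 x).neg).fderiv]
  fin_cases μ <;> simp [Pi.single_apply]

lemma hasFDerivAt_cos2 (x : Fin 4 → ℝ) :
    HasFDerivAt (fun y : Fin 4 → ℝ => Real.cos (y 2))
      ((-Real.sin (x 2)) • prj 2) x :=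
  by have := (Real.hasDerivAt_cos (x 2)).comp_hasFDerivAt x (hasFDerivAt_proj 2 x); exact this

lemma pd_cos (μ : Fin 4) (x : Fin 4 → ℝ) :
    pd μ (fun y => Real.cos (y 2)) x = if μ = 2 then -Real.sin (x 2) else 0 := by
  rw [pd, (hasFDerivAt_cos2 x).fderiv]
  fin_cases μ <;> simp [Pi.single_apply]

lemma pd_neg_cos (μ : Fin 4) (x : Fin 4 → ℝ) :
    pd μ (fun y => -Real.cos (y 2)) x = if μ = 2 then Real.sin (x 2) else 0 := by
  rw [pd, (show HasFDerivAt (fun y : Fin 4 → ℝ => -Real.cos (y 2)) _ x from (hasFDerivAt_cos2 x).neg).fderiv]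
  fin_cases μ <;> simp [Pi.single_apply]

lemma hasFDerivAt_exprsin (H₀ : ℝ) (x : Fin 4 → ℝ) :
    HasFDerivAt (fun y : Fin 4 → ℝ => Real.exp (H₀ * y 0) * y 1 * Real.sin (y 2))
      ((Real.exp (H₀ * x 0) * x 1) • (Real.cos (x 2) • prj 2)
        + Real.sin (x 2) • (Real.exp (H₀ * x 0) • prj 1
            + x 1 • ((H₀ * Real.exp (H₀ * x 0)) • prj 0))) x :=
  (hasFDerivAt_expr H₀ x).mul (hasFDerivAt_sin2 x)

lemma pd_exprsin (H₀ : ℝ) (μ : Fin 4) (x : Fin 4 → ℝ) :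
    pd μ (fun y => Real.exp (H₀ * y 0) * y 1 * Real.sin (y 2)) x
      = if μ = 0 then H₀ * Real.exp (H₀ * x 0) * x 1 * Real.sin (x 2)
        else if μ = 1 then Real.exp (H₀ * x 0) * Real.sin (x 2)
        else if μ = 2 then Real.exp (H₀ * x 0) * x 1 * Real.cos (x 2) else 0 := by
  rw [pd, (hasFDerivAt_exprsin H₀ x).fderiv]
  fin_cases μ <;> simp [Pi.single_apply] <;> ring

end Helpers

/-- X₇ is an affine frame symmetry of the k = 0 TRW geometry with
a(t) = e^{H₀ t}: the Lie derivatives along X₇ of the coframe one-forms and of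
the spin-connection one-forms all vanish on U. -/
theorem X7_affine_frame_symmetry (H₀ : ℝ) (hH₀ : H₀ ≠ 0)
    (x : Fin 4 → ℝ) (hr : 0 < x 1) (hθ₁ : 0 < x 2) (hθ₂ : x 2 < Real.pi) :
    (∀ a μ : Fin 4,
      (∑ ν, X7 H₀ x ν * pd ν (fun y => coframe H₀ y a μ) x)
        + (∑ ν, coframe H₀ x a ν * pd μ (fun y => X7 H₀ y ν) x) = 0) ∧
    (∀ a b μ : Fin 4,
      (∑ ν, X7 H₀ x ν * pd ν (fun y => conn y a b μ) x)
        + (∑ ν, conn x a b ν * pd μ (fun y => X7 H₀ y ν) x) = 0) := by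
  constructor
  · intro a μ
    fin_cases a <;> fin_cases μ <;>
      simp [X7, coframe, Matrix.diagonal, Fin.sum_univ_four, pd_const, pd_proj,
        pd_exp, pd_expr, pd_exprsin, pd_sin, pd_cos, pd_neg_sin, pd_neg_cos] <;>
      field_simp <;> ring
  · intro a b μ
    fin_cases a <;> fin_cases b <;> fin_cases μ <;>
      simp [X7, conn, Fin.sum_univ_four, pd_const, pd_proj,
        pd_sin, pd_cos, pd_neg_sin, pd_neg_cos]


end
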